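/- For all sufficiently small z > 0 (in particular for 0 < z small enough that 1 - 3z + 14z² + 3z³ + 10z⁴ > 0), the function r(z) = 3e^{-z-z³}(1 - e^{-z-z³}) - log(1+3z) satisfies r'(z) ≤ 0 and hence r(z) ≤ r(0) = 0, i.e., 3e^{-z-z³}(1 - e^{-z-z³}) ≤ log(1+3z). -/

import Mathlib

private lemma hasDerivR (z : ℝ) (hz : -(1/3) < z) :
    HasDerivAt (fun z => 3 * Real.exp (-z - z^3) * (1 - Real.exp (-z - z^3))
        - Real.log (1 + 3*z))
      (3 * (Real.exp (-z - z^3) * (-(1+3*z^2))) * (1 - Real.exp (-z - z^3))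
        + 3 * Real.exp (-z - z^3) * -(Real.exp (-z - z^3) * (-(1+3*z^2)))
        - 3 / (1 + 3*z)) z := by
  have hne : 1 + 3*z ≠ 0 := by nlinarith
  have hw : HasDerivAt (fun z : ℝ => -z - z^3) (-(1+3*z^2)) z := by
    have := ((hasDerivAt_id z).neg).sub (hasDerivAt_pow 3 z)
    refine this.congr_deriv ?_
    push_cast
    ring
  have he : HasDerivAt (fun z : ℝ => Real.exp (-z - z^3))
      (Real.exp (-z - z^3) * (-(1+3*z^2))) z := hw.exp
  have hlog : HasDerivAt (fun z : ℝ => Real.log (1 + 3*z)) (3/(1+3*z)) z := by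
    have h1 : HasDerivAt (fun z : ℝ => 1 + 3*z) 3 z := by
      simpa using ((hasDerivAt_id z).const_mul 3).const_add 1
    exact h1.log hne
  have := (((he.const_mul 3).mul ((hasDerivAt_const z (1:ℝ)).sub he))).sub hlog
  refine this.congr_deriv ?_
  simp only [Pi.sub_apply]
  ring

private lemma derivNonpos (z : ℝ) (hz : 0 ≤ z) :
    3 * (Real.exp (-z - z^3) * (-(1+3*z^2))) * (1 - Real.exp (-z - z^3))
      + 3 * Real.exp (-z - z^3) * -(Real.exp (-z - z^3) * (-(1+3*z^2)))
      - 3 / (1 + 3*z) ≤ 0 := by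
  set A := Real.exp (-z - z^3) with hA
  set E := Real.exp (z + z^3) with hEdef
  have hAE : A * E = 1 := by
    rw [hA, hEdef, ← Real.exp_add]
    norm_num
  have hApos : 0 < A := Real.exp_pos _
  have hEpos : 0 < E := Real.exp_pos _
  have hE : 1 + (z + z^3) ≤ E := by rw [hEdef]; linarith [Real.add_one_le_exp (z + z^3)]
  have h3z : 0 < 1 + 3*z := by linarith
  rw [sub_nonpos, le_div_iff₀ h3z] at *
  -- want: (3*(A*(-(1+3z²)))*(1-A) + 3*A*(-(A*(-(1+3z²))))) * (1+3z) ≤ 3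
  have key : 6*(1+3*z^2)*(1+3*z) - 3*(1+3*z^2)*(1+3*z)*E ≤ 3*E^2 := by
    nlinarith [sq_nonneg (28*z - 3), mul_nonneg (mul_nonneg hz hz) hz,
      mul_nonneg (mul_nonneg (mul_nonneg hz hz) hz) hz, sq_nonneg (E - (1 + z + z^3)),
      sq_nonneg z]
  have hXE : (3 * (A * (-(1+3*z^2))) * (1 - A)
      + 3 * A * -(A * (-(1+3*z^2)))) * (1+3*z) * E^2
      = 6*(1+3*z^2)*(1+3*z) - 3*(1+3*z^2)*(1+3*z)*E := by
    linear_combination ((1+3*z^2)*(1+3*z)*(6*A*E + 6 - 3*E)) * hAE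
  have h2 : (3 * (A * (-(1+3*z^2))) * (1 - A)
      + 3 * A * -(A * (-(1+3*z^2)))) * (1+3*z) * E^2 ≤ 3 * E^2 := by
    rw [hXE]; exact key
  exact le_of_mul_le_mul_right h2 (pow_pos hEpos 2)

theorem stmt17 :
    ∃ ε > (0:ℝ), ∀ z : ℝ, 0 < z → z < ε →
      (0 < 1 - 3*z + 14*z^2 + 3*z^3 + 10*z^4) ∧
      deriv (fun z => 3 * Real.exp (-z - z^3) * (1 - Real.exp (-z - z^3))
          - Real.log (1 + 3*z)) z ≤ 0 ∧
      3 * Real.exp (-z - z^3) * (1 - Real.exp (-z - z^3)) ≤ Real.log (1 + 3*z) := by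
  refine ⟨1/4, by norm_num, fun z hz hz' => ?_⟩
  have hz3 : -(1/3:ℝ) < z := by linarith
  refine ⟨by nlinarith [sq_nonneg (28*z - 3)], ?_, ?_⟩
  · rw [(hasDerivR z hz3).deriv]
    exact derivNonpos z hz.le
  · have hanti : AntitoneOn (fun z => 3 * Real.exp (-z - z^3) * (1 - Real.exp (-z - z^3))
        - Real.log (1 + 3*z)) (Set.Icc 0 (1/4)) := by
      apply antitoneOn_of_deriv_nonpos (convex_Icc _ _)
      · intro x hx
        have hx3 : -(1/3:ℝ) < x := by
          have := hx.1; linarith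
        exact (hasDerivR x hx3).differentiableAt.continuousAt.continuousWithinAt
      · intro x hx
        rw [interior_Icc] at hx
        have hx3 : -(1/3:ℝ) < x := by linarith [hx.1]
        exact (hasDerivR x hx3).differentiableAt.differentiableWithinAt
      · intro x hx
        rw [interior_Icc] at hx
        have hx3 : -(1/3:ℝ) < x := by linarith [hx.1]
        rw [(hasDerivR x hx3).deriv]
        exact derivNonpos x hx.1.le
    have h0 : (0:ℝ) ∈ Set.Icc (0:ℝ) (1/4) := by norm_num
    have hzmem : z ∈ Set.Icc (0:ℝ) (1/4) := ⟨hz.le, hz'.le⟩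
    have := hanti h0 hzmem hz.le
    simp only [neg_zero, zero_pow, mul_zero, Real.exp_zero] at this
    norm_num at this
    linarith [this]
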